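/- For i ≠ j and h ∈ ℕ, the raising geometric product ⋄_{ji}^{(h)} on Λ(V)^{⊗m} equals the h-th divided power of the simple geometric product: ⋄_{ji}^{(h)} = (⋄_{ji})^h / h!. In particular (⋄_{ji})^h (A₁⊗⋯⊗Aₘ) is divisible by h! for all decomposable arguments. -/

import Mathlib

/-- The shuffle sign of the coproduct slice `(Sᶜ, S)` of a word of length `a`. -/
def shuffleSign {a : ℕ} (S : Finset (Fin a)) : ℤ :=
  (-1) ^ (∑ i ∈ S, (Sᶜ.filter fun j => i < j).card)

abbrev TensorPowerExt (K V : Type*) [Field K] [AddCommGroup V] [Module K V] (m : ℕ) : Type _ :=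
  ExteriorAlgebra K (Fin m → V)

noncomputable def slotVar {K V : Type*} [Field K] [AddCommGroup V] [Module K V] {m : ℕ}
    (i : Fin m) (v : V) : TensorPowerExt K V m :=
  ExteriorAlgebra.ι K (Pi.single i v)

noncomputable def slotExt {K V : Type*} [Field K] [AddCommGroup V] [Module K V] {m : ℕ}
    (s : Fin m) {c : ℕ} (w : Fin c → V) : TensorPowerExt K V m :=
  ExteriorAlgebra.ιMulti K c fun t => Pi.single s (w t)

noncomputable def slotWedgeOn {K V : Type*} [Field K] [AddCommGroup V] [Module K V] {m : ℕ}
    (s : Fin m) {c : ℕ} (w : Fin c → V) (S : Finset (Fin c)) : TensorPowerExt K V m :=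
  ((S.sort (· ≤ ·)).map fun t => ExteriorAlgebra.ι K (Pi.single s (w t))).prod

noncomputable def pureTensor {K V : Type*} [Field K] [AddCommGroup V] [Module K V] {m : ℕ}
    (a : Fin m → ℕ) (u : (s : Fin m) → Fin (a s) → V) : TensorPowerExt K V m :=
  (List.ofFn fun s => slotExt s (u s)).prod

namespace Stmt13
open ExteriorAlgebra

variable {K V : Type*} [Field K] [AddCommGroup V] [Module K V] {m : ℕ}

local notation "𝔸" => TensorPowerExt K V m

lemma iota_swap (x y : Fin m → V) : ι K x * ι K y = - (ι K y * ι K x) :=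
  eq_neg_of_add_eq_zero_left (ExteriorAlgebra.ι_add_mul_swap x y)

/-- `y` is a product of `n` generators. -/
def IsP (n : ℕ) (y : 𝔸) : Prop :=
  ∃ l : List (Fin m → V), l.length = n ∧ y = (l.map fun w => ι K w).prod

lemma isP_one : IsP (K := K) (V := V) (m := m) 0 1 := ⟨[], rfl, rfl⟩

lemma isP_mul {n n' : ℕ} {y y' : 𝔸} (h : IsP n y) (h' : IsP n' y') : IsP (n + n') (y * y') := by
  obtain ⟨l, hl, rfl⟩ := h; obtain ⟨l', hl', rfl⟩ := h'
  exact ⟨l ++ l', by simp [hl, hl'], by simp⟩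

lemma isP_slotVar (s : Fin m) (v : V) : IsP 1 (slotVar (K := K) s v) :=
  ⟨[Pi.single s v], rfl, by simp [slotVar]⟩

lemma isP_slotExt (s : Fin m) {c : ℕ} (w : Fin c → V) : IsP c (slotExt (K := K) s w) :=
  ⟨List.ofFn fun t => Pi.single s (w t), by simp, by
    rw [slotExt, ιMulti_apply, List.map_ofFn]; rfl⟩

lemma isP_slotWedgeOn (s : Fin m) {c : ℕ} (w : Fin c → V) (S : Finset (Fin c)) :
    IsP S.card (slotWedgeOn (K := K) s w S) :=
  ⟨(S.sort (· ≤ ·)).map fun t => Pi.single s (w t), by simp, by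
    rw [slotWedgeOn, List.map_map]; rfl⟩

lemma iota_mul_isP {n : ℕ} {y : 𝔸} (h : IsP n y) (w : Fin m → V) :
    ι K w * y = ((-1 : ℤ) ^ n) • (y * ι K w) := by
  obtain ⟨l, rfl, rfl⟩ := h
  induction l with
  | nil => simp
  | cons x l ih =>
    simp only [List.map_cons, List.prod_cons, List.length_cons]
    rw [← mul_assoc, iota_swap, neg_mul, mul_assoc, ih]
    rw [mul_smul_comm, pow_succ, ← neg_smul]
    rw [mul_assoc]
    ring_nf

lemma isP_mul_iota {n : ℕ} {y : 𝔸} (h : IsP n y) (w : Fin m → V) :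
    y * ι K w = ((-1 : ℤ) ^ n) • (ι K w * y) := by
  rw [iota_mul_isP h w, smul_smul, ← pow_add]
  rw [show ((-1 : ℤ)) ^ (n + n) = 1 by
    simpa using Even.neg_one_pow (Int := ℤ) ⟨n, rfl⟩]
  simp



lemma ofFn_update_split {m' : ℕ} (g : Fin m' → 𝔸) (i : Fin m') :
    ∃ p q : 𝔸, ∀ x, (List.ofFn (Function.update g i x)).prod = p * x * q := by
  induction m' with
  | zero => exact i.elim0
  | succ m' IH =>
    rcases Fin.eq_zero_or_eq_succ i with rfl | ⟨i', rfl⟩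
    · refine ⟨1, (List.ofFn (g ∘ Fin.succ)).prod, fun x => ?_⟩
      rw [List.ofFn_succ, List.prod_cons, Function.update_self, one_mul]
      congr 1
    · obtain ⟨p, q, hpq⟩ := IH (g ∘ Fin.succ) i'
      refine ⟨g 0 * p, q, fun x => ?_⟩
      rw [List.ofFn_succ, List.prod_cons, Function.update_of_ne (Fin.succ_ne_zero i').symm]
      rw [show (fun i : Fin m' => Function.update g i'.succ x i.succ)
            = Function.update (g ∘ Fin.succ) i' x from
          Function.update_comp_eq_of_injective g (Fin.succ_injective _) i' x, hpq,
        mul_assoc, mul_assoc, mul_assoc]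

lemma ofFn_update_sum {m' : ℕ} (g : Fin m' → 𝔸) (i : Fin m') {β : Type*} (s : Finset β)
    (f : β → 𝔸) :
    (List.ofFn (Function.update g i (∑ b ∈ s, f b))).prod =
      ∑ b ∈ s, (List.ofFn (Function.update g i (f b))).prod := by
  obtain ⟨p, q, hpq⟩ := ofFn_update_split g i
  simp [hpq, Finset.mul_sum, Finset.sum_mul]

lemma ofFn_update_zsmul {m' : ℕ} (g : Fin m' → 𝔸) (i : Fin m') (z : ℤ) (x : 𝔸) :
    (List.ofFn (Function.update g i (z • x))).prod =
      z • (List.ofFn (Function.update g i x)).prod := by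
  obtain ⟨p, q, hpq⟩ := ofFn_update_split g i
  rw [hpq, hpq, mul_smul_comm, smul_mul_assoc]

lemma moveIn {m' : ℕ} (g : Fin m' → 𝔸) (n : Fin m' → ℕ) (jj : Fin m')
    (hg : ∀ s, s < jj → IsP (n s) (g s)) (w : Fin m → V) :
    ι K w * (List.ofFn g).prod =
      ((-1 : ℤ) ^ (∑ s : Fin m', if s < jj then n s else 0)) •
        (List.ofFn (Function.update g jj (ι K w * g jj))).prod := by
  induction m' with
  | zero => exact jj.elim0
  | succ m' IH =>
    rcases Fin.eq_zero_or_eq_succ jj with rfl | ⟨jj', rfl⟩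
    · have : (∑ s : Fin (m' + 1), if s < 0 then n s else 0) = 0 := by
        simp [Fin.not_lt_zero]
      rw [this, pow_zero, one_smul, List.ofFn_succ, List.ofFn_succ, List.prod_cons,
        List.prod_cons, Function.update_self, ← mul_assoc,
        show (fun i : Fin m' => Function.update g 0 (ι K w * g 0) i.succ)
          = fun i => g i.succ from funext fun i =>
            Function.update_of_ne (Fin.succ_ne_zero i) _ g]
    · rw [List.ofFn_succ, List.prod_cons, ← mul_assoc,
        iota_mul_isP (hg 0 (Fin.succ_pos jj')) w, smul_mul_assoc, mul_assoc,
        show (fun i : Fin m' => g i.succ) = g ∘ Fin.succ from rfl,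
        IH (g ∘ Fin.succ) (n ∘ Fin.succ) jj'
          (fun s hs => hg s.succ (Fin.succ_lt_succ_iff.mpr hs))]
      rw [mul_smul_comm, smul_smul, ← pow_add]
      rw [List.ofFn_succ (f := Function.update g jj'.succ (ι K w * g jj'.succ)),
        List.prod_cons, Function.update_of_ne (Fin.succ_ne_zero jj').symm]
      rw [show (fun i : Fin m' => Function.update g jj'.succ (ι K w * g jj'.succ) i.succ)
            = Function.update (g ∘ Fin.succ) jj' (ι K w * g jj'.succ) from
          Function.update_comp_eq_of_injective g (Fin.succ_injective _) jj' _]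
      congr 1
      rw [Fin.sum_univ_succ]
      simp [Fin.succ_lt_succ_iff, Fin.succ_pos]

lemma moveAcross {m' : ℕ} (g : Fin m' → 𝔸) (n : Fin m' → ℕ) (ii jj : Fin m') (hij : ii < jj)
    (hg : ∀ s, ii < s → s < jj → IsP (n s) (g s)) (w : Fin m → V) :
    (List.ofFn (Function.update g ii (g ii * ι K w))).prod =
      ((-1 : ℤ) ^ (∑ s : Fin m', if ii < s ∧ s < jj then n s else 0)) •
        (List.ofFn (Function.update g jj (ι K w * g jj))).prod := by
  induction m' with
  | zero => exact ii.elim0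
  | succ m' IH =>
    rcases Fin.eq_zero_or_eq_succ jj with rfl | ⟨jj', rfl⟩
    · exact absurd hij (Fin.not_lt_zero ii)
    rcases Fin.eq_zero_or_eq_succ ii with rfl | ⟨ii', rfl⟩
    · -- move from slot 0 : peel head, apply moveIn on the tail
      rw [List.ofFn_succ, List.prod_cons, Function.update_self,
        show (fun i : Fin m' => Function.update g 0 (g 0 * ι K w) i.succ)
          = g ∘ Fin.succ from funext fun i =>
            Function.update_of_ne (Fin.succ_ne_zero i) _ g,
        mul_assoc,
        moveIn (g ∘ Fin.succ) (n ∘ Fin.succ) jj'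
          (fun s hs => hg s.succ (Fin.succ_pos s) (Fin.succ_lt_succ_iff.mpr hs)) w,
        mul_smul_comm]
      rw [List.ofFn_succ (f := Function.update g jj'.succ (ι K w * g jj'.succ)),
        List.prod_cons, Function.update_of_ne (Fin.succ_ne_zero jj').symm,
        show (fun i : Fin m' => Function.update g jj'.succ (ι K w * g jj'.succ) i.succ)
            = Function.update (g ∘ Fin.succ) jj' (ι K w * g jj'.succ) from
          Function.update_comp_eq_of_injective g (Fin.succ_injective _) jj' _]
      congr 1
      rw [Fin.sum_univ_succ]
      simp [Fin.succ_lt_succ_iff, Fin.succ_pos]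
    · -- both nonzero : recurse on the tail
      have hij' : ii' < jj' := by
        simpa [Fin.succ_lt_succ_iff] using hij
      rw [List.ofFn_succ, List.prod_cons,
        Function.update_of_ne (Fin.succ_ne_zero ii').symm,
        show (fun i : Fin m' => Function.update g ii'.succ (g ii'.succ * ι K w) i.succ)
            = Function.update (g ∘ Fin.succ) ii' ((g ∘ Fin.succ) ii' * ι K w) from
          Function.update_comp_eq_of_injective g (Fin.succ_injective _) ii' _,
        IH (g ∘ Fin.succ) (n ∘ Fin.succ) ii' jj' hij'
          (fun s h1 h2 => hg s.succ (Fin.succ_lt_succ_iff.mpr h1) (Fin.succ_lt_succ_iff.mpr h2)),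
        mul_smul_comm]
      rw [List.ofFn_succ (f := Function.update g jj'.succ (ι K w * g jj'.succ)),
        List.prod_cons, Function.update_of_ne (Fin.succ_ne_zero jj').symm,
        show (fun i : Fin m' => Function.update g jj'.succ (ι K w * g jj'.succ) i.succ)
            = Function.update (g ∘ Fin.succ) jj' (ι K w * g jj'.succ) from
          Function.update_comp_eq_of_injective g (Fin.succ_injective _) jj' _]
      congr 1
      rw [Fin.sum_univ_succ]
      simp [Fin.succ_lt_succ_iff, Fin.succ_pos]

lemma slotWedgeOn_empty (s : Fin m) {c : ℕ} (w : Fin c → V) :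
    slotWedgeOn (K := K) s w ∅ = 1 := by
  simp [slotWedgeOn]

lemma slotWedgeOn_insert_min (s : Fin m) {c : ℕ} (w : Fin c → V) {t : Fin c} {T : Finset (Fin c)}
    (h1 : ∀ x ∈ T, t < x) (h2 : t ∉ T) :
    slotWedgeOn (K := K) s w (insert t T) = slotVar s (w t) * slotWedgeOn s w T := by
  rw [slotWedgeOn, Finset.sort_insert _ (fun b hb => le_of_lt (h1 b hb)) h2]
  simp [slotWedgeOn, slotVar]

lemma slotVar_mul_slotWedgeOn (s₀ : Fin m) {c : ℕ} (w : Fin c → V) {t : Fin c}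
    {S : Finset (Fin c)} (ht : t ∉ S) :
    slotVar (K := K) s₀ (w t) * slotWedgeOn s₀ w S =
      ((-1 : ℤ) ^ (S.filter (· < t)).card) • slotWedgeOn s₀ w (insert t S) := by
  induction S using Finset.induction_on_min with
  | empty =>
    rw [slotWedgeOn_empty, mul_one,
      show insert t (∅ : Finset (Fin c)) = {t} from rfl]
    simp [slotWedgeOn, slotVar]
  | insert a r hmin IH =>
    have has : a ∉ r := fun h => lt_irrefl a (hmin a h)
    have hts : t ∉ r := fun h => ht (Finset.mem_insert_of_mem h)
    have hta : t ≠ a := fun h => ht (h ▸ Finset.mem_insert_self a r)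
    rcases lt_or_gt_of_ne hta with hlt | hgt
    · -- t < a : t is smaller than everything
      have hfilter : (insert a r).filter (· < t) = ∅ := by
        ext x
        simp only [Finset.mem_filter, Finset.mem_insert, Finset.notMem_empty, iff_false]
        rintro ⟨rfl | hx, hxt⟩
        · exact absurd hxt (not_lt.mpr (le_of_lt hlt))
        · exact absurd hxt (not_lt.mpr (le_of_lt (lt_trans hlt (hmin _ hx))))
      rw [hfilter, Finset.card_empty, pow_zero, one_smul,
        slotWedgeOn_insert_min s₀ w (t := t) (T := insert a r) ?_ ht]
      intro x hx
      rcases Finset.mem_insert.mp hx with rfl | hx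
      · exact hlt
      · exact lt_trans hlt (hmin _ hx)
    · -- a < t
      have hat : a < t := hgt
      rw [slotWedgeOn_insert_min s₀ w hmin has, ← mul_assoc,
        show slotVar (K := K) s₀ (w t) * slotVar s₀ (w a)
            = - (slotVar s₀ (w a) * slotVar s₀ (w t)) from iota_swap _ _,
        neg_mul, mul_assoc, IH hts, mul_smul_comm, ← neg_smul]
      have h1 : insert t (insert a r) = insert a (insert t r) := Finset.insert_comm t a r
      have h2 : slotWedgeOn (K := K) s₀ w (insert a (insert t r))
          = slotVar s₀ (w a) * slotWedgeOn s₀ w (insert t r) := by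
        refine slotWedgeOn_insert_min s₀ w ?_ ?_
        · intro x hx
          rcases Finset.mem_insert.mp hx with rfl | hx
          · exact hat
          · exact hmin _ hx
        · simp [has, Ne.symm hta]
      rw [h1, h2]
      have h3 : (insert a r).filter (· < t) = insert a (r.filter (· < t)) := by
        ext x
        simp only [Finset.mem_filter, Finset.mem_insert]
        constructor
        · rintro ⟨rfl | hx, hxt⟩
          · exact Or.inl rfl
          · exact Or.inr ⟨hx, hxt⟩
        · rintro (rfl | ⟨hx, hxt⟩)
          · exact ⟨Or.inl rfl, hat⟩
          · exact ⟨Or.inr hx, hxt⟩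
      rw [h3, Finset.card_insert_of_notMem (fun hc => has (Finset.mem_of_mem_filter a hc)),
        pow_succ]
      ring_nf

section Deriv

variable (D : Module.End K (TensorPowerExt K V m))
  (hL : ∀ x y : TensorPowerExt K V m, D (x * y) = D x * y + x * D y)
  (i j : Fin m) (hgen : ∀ (s : Fin m) (v : V), D (slotVar s v) = if s = i then slotVar j v else 0)

include hL

lemma D_one : D 1 = 0 := by
  have h := hL 1 1
  simp only [one_mul, mul_one] at h
  exact (left_eq_add.mp h)

lemma D_list_prod (l : List (TensorPowerExt K V m)) (h : ∀ x ∈ l, D x = 0) : D l.prod = 0 := by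
  induction l with
  | nil => simpa using D_one D hL
  | cons x l ih =>
    rw [List.prod_cons, hL, h x (List.mem_cons_self),
      ih fun y hy => h y (List.mem_cons_of_mem x hy)]
    simp

include hgen

lemma D_slotVar_ne {s : Fin m} (hs : s ≠ i) (v : V) : D (slotVar s v) = 0 := by
  rw [hgen, if_neg hs]

lemma D_slotExt_ne {s : Fin m} (hs : s ≠ i) {c : ℕ} (w : Fin c → V) :
    D (slotExt s w) = 0 := by
  rw [slotExt, ιMulti_apply]
  refine D_list_prod D hL _ fun x hx => ?_
  obtain ⟨t, rfl⟩ := (List.mem_ofFn).mp hx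
  exact D_slotVar_ne D hL i j hgen hs _

lemma D_slotWedgeOn_ne {s : Fin m} (hs : s ≠ i) {c : ℕ} (w : Fin c → V) (S : Finset (Fin c)) :
    D (slotWedgeOn s w S) = 0 := by
  refine D_list_prod D hL _ fun x hx => ?_
  obtain ⟨t, _, rfl⟩ := List.mem_map.mp hx
  exact D_slotVar_ne D hL i j hgen hs _

omit hgen

lemma D_ofFn_update {m' : ℕ} (g : Fin m' → TensorPowerExt K V m) (ii : Fin m')
    (hg : ∀ s, s ≠ ii → D (g s) = 0) :
    D (List.ofFn g).prod = (List.ofFn (Function.update g ii (D (g ii)))).prod := by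
  induction m' with
  | zero => exact ii.elim0
  | succ m' IH =>
    rcases Fin.eq_zero_or_eq_succ ii with rfl | ⟨ii', rfl⟩
    · rw [List.ofFn_succ, List.prod_cons, hL,
        D_list_prod D hL _ (fun x hx => by
          obtain ⟨t, rfl⟩ := (List.mem_ofFn).mp hx
          exact hg t.succ (Fin.succ_ne_zero t)),
        mul_zero, add_zero, List.ofFn_succ (f := Function.update g 0 (D (g 0))),
        List.prod_cons, Function.update_self,
        show (fun i : Fin m' => Function.update g 0 (D (g 0)) i.succ)
          = fun i => g i.succ from funext fun i =>
            Function.update_of_ne (Fin.succ_ne_zero i) _ g]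
    · rw [List.ofFn_succ, List.prod_cons, hL, hg 0 (Fin.succ_ne_zero ii').symm, zero_mul,
        zero_add,
        show (fun i : Fin m' => g i.succ) = g ∘ Fin.succ from rfl,
        IH (g ∘ Fin.succ) ii' (fun s hs => hg s.succ (fun hc => hs (Fin.succ_injective _ hc))),
        List.ofFn_succ (f := Function.update g ii'.succ (D (g ii'.succ))),
        List.prod_cons, Function.update_of_ne (Fin.succ_ne_zero ii').symm,
        show (fun i : Fin m' => Function.update g ii'.succ (D (g ii'.succ)) i.succ)
            = Function.update (g ∘ Fin.succ) ii' (D (g ii'.succ)) from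
          Function.update_comp_eq_of_injective g (Fin.succ_injective _) ii' _]
      rfl

include hgen

lemma D_wedge {c : ℕ} (w : Fin c → V) (T : Finset (Fin c)) :
    D (slotWedgeOn i w T) =
      ∑ t ∈ T, ((-1 : ℤ) ^ (T.filter fun x => t < x).card) •
        (slotWedgeOn i w (T.erase t) * slotVar j (w t)) := by
  induction T using Finset.induction_on_min with
  | empty => rw [slotWedgeOn_empty]; simpa using D_one D hL
  | insert a r hmin IH =>
    have har : a ∉ r := fun h => lt_irrefl a (hmin a h)
    rw [slotWedgeOn_insert_min i w hmin har, hL, hgen, if_pos rfl, IH,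
      show slotVar (K := K) j (w a) = ι K (Pi.single j (w a)) from rfl,
      iota_mul_isP (isP_slotWedgeOn i w r) (Pi.single j (w a))]
    rw [Finset.sum_insert har]
    congr 1
    · -- the new `a`-term
      have hfa : (insert a r).filter (fun x => a < x) = r := by
        ext x
        simp only [Finset.mem_filter, Finset.mem_insert]
        constructor
        · rintro ⟨rfl | hx, hax⟩
          · exact absurd hax (lt_irrefl _)
          · exact hx
        · intro hx
          exact ⟨Or.inr hx, hmin x hx⟩
      rw [Finset.erase_insert har, hfa]
      rfl
    · -- the remaining terms
      rw [Finset.mul_sum]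
      refine Finset.sum_congr rfl fun t htr => ?_
      have hta : t ≠ a := fun h => har (h ▸ htr)
      rw [mul_smul_comm, ← mul_assoc]
      have h1 : slotVar (K := K) i (w a) * slotWedgeOn i w (r.erase t)
          = slotWedgeOn i w (insert a (r.erase t)) := by
        refine (slotWedgeOn_insert_min i w ?_ ?_).symm
        · exact fun x hx => hmin x (Finset.mem_of_mem_erase hx)
        · exact fun h => har (Finset.mem_of_mem_erase h)
      have h2 : insert a (r.erase t) = (insert a r).erase t := by
        rw [Finset.erase_insert_of_ne hta.symm]
      have h3 : (insert a r).filter (fun x => t < x) = r.filter (fun x => t < x) := by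
        ext x
        simp only [Finset.mem_filter, Finset.mem_insert]
        constructor
        · rintro ⟨rfl | hx, htx⟩
          · exact absurd htx (not_lt.mpr (le_of_lt (hmin t htr)))
          · exact ⟨hx, htx⟩
        · rintro ⟨hx, htx⟩
          exact ⟨Or.inr hx, htx⟩
      rw [h1, h2, h3]

lemma D_Pfun (hij : i < j) (a : Fin m → ℕ) (u : (s : Fin m) → Fin (a s) → V)
    (S : Finset (Fin (a i))) :
    D (List.ofFn fun s : Fin m =>
        if s = i then slotWedgeOn i (u i) Sᶜ
        else if s = j then slotWedgeOn j (u i) S * slotExt j (u j)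
        else slotExt s (u s)).prod =
      ∑ t ∈ Sᶜ, ((-1 : ℤ) ^ ((Sᶜ.filter fun x => t < x).card
          + (∑ s : Fin m, if i < s ∧ s < j then a s else 0)
          + (S.filter (· < t)).card)) •
        (List.ofFn fun s : Fin m =>
          if s = i then slotWedgeOn i (u i) (insert t S)ᶜ
          else if s = j then slotWedgeOn j (u i) (insert t S) * slotExt j (u j)
          else slotExt s (u s)).prod := by
  have hne : i ≠ j := ne_of_lt hij
  set F : Fin m → TensorPowerExt K V m := fun s =>
    if s = i then slotWedgeOn i (u i) Sᶜ
    else if s = j then slotWedgeOn j (u i) S * slotExt j (u j)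
    else slotExt s (u s) with hF
  have hDF : ∀ s, s ≠ i → D (F s) = 0 := by
    intro s hs
    by_cases hsj : s = j
    · rw [hF]
      simp only [hsj, if_neg (Ne.symm hne), eq_self_iff_true, if_true]
      rw [hL, D_slotWedgeOn_ne D hL i j hgen (Ne.symm hne),
        D_slotExt_ne D hL i j hgen (Ne.symm hne), zero_mul, mul_zero, add_zero]
    · rw [hF]
      simp only [if_neg hs, if_neg hsj]
      exact D_slotExt_ne D hL i j hgen hs _
  have hFi : F i = slotWedgeOn i (u i) Sᶜ := by rw [hF]; simp
  rw [D_ofFn_update D hL F i hDF, hFi, D_wedge D hL i j hgen (u i) Sᶜ, ofFn_update_sum]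
  refine Finset.sum_congr rfl fun t ht => ?_
  have htS : t ∉ S := by simpa using ht
  rw [ofFn_update_zsmul]
  set g : Fin m → TensorPowerExt K V m :=
    Function.update F i (slotWedgeOn i (u i) (Sᶜ.erase t)) with hg
  have step1 : Function.update F i (slotWedgeOn i (u i) (Sᶜ.erase t) * slotVar j (u i t))
      = Function.update g i (g i * ι K (Pi.single j (u i t))) := by
    rw [hg, Function.update_idem, Function.update_self]
    rfl
  have hgIsP : ∀ s, i < s → s < j → IsP (a s) (g s) := by
    intro s h1 h2
    rw [hg, Function.update_of_ne (ne_of_gt h1), hF]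
    simp only [if_neg (ne_of_gt h1), if_neg (ne_of_lt h2)]
    exact isP_slotExt s (u s)
  rw [step1, moveAcross g (fun s => a s) i j hij hgIsP (Pi.single j (u i t))]
  have hgj : g j = slotWedgeOn j (u i) S * slotExt j (u j) := by
    rw [hg, Function.update_of_ne (Ne.symm hne), hF]
    simp only [if_neg (Ne.symm hne), eq_self_iff_true, if_true]
  rw [hgj, ← mul_assoc,
    show (ι K) (Pi.single j (u i t)) = slotVar (K := K) j (u i t) from rfl,
    slotVar_mul_slotWedgeOn j (u i) htS, smul_mul_assoc, ofFn_update_zsmul]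
  have hupd : Function.update g j
        (slotWedgeOn j (u i) (insert t S) * slotExt j (u j))
      = fun s : Fin m =>
          if s = i then slotWedgeOn i (u i) (insert t S)ᶜ
          else if s = j then slotWedgeOn j (u i) (insert t S) * slotExt j (u j)
          else slotExt s (u s) := by
    funext s
    by_cases hsj : s = j
    · rw [hsj, Function.update_self, if_neg (Ne.symm hne), if_pos rfl]
    · rw [Function.update_of_ne hsj, hg]
      by_cases hsi : s = i
      · rw [hsi, Function.update_self, if_pos rfl, Finset.compl_insert]
      · rw [Function.update_of_ne hsi, hF]
        simp only [if_neg hsi, if_neg hsj]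
  rw [hupd, smul_smul, smul_smul, ← pow_add, ← pow_add]

end Deriv

/-! ### Combinatorial sign lemmas -/

lemma neg_one_pow_congr {p q : ℕ} (h : p % 2 = q % 2) : ((-1 : ℤ)) ^ p = (-1) ^ q := by
  conv_lhs => rw [← Nat.div_add_mod p 2]
  conv_rhs => rw [← Nat.div_add_mod q 2]
  rw [pow_add, pow_add, pow_mul, pow_mul, h]
  norm_num

lemma shuffle_exponent {c : ℕ} (S : Finset (Fin c)) (t : Fin c) (ht : t ∉ S) :
    (∑ x ∈ insert t S, (((insert t S)ᶜ).filter fun y => x < y).card)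
        + (S.filter (· < t)).card
      = (∑ x ∈ S, ((Sᶜ).filter fun y => x < y).card)
        + ((Sᶜ).filter fun y => t < y).card := by
  rw [Finset.sum_insert ht, Finset.compl_insert]
  have h1 : ((Sᶜ.erase t).filter fun y => t < y) = (Sᶜ.filter fun y => t < y) := by
    ext y
    simp only [Finset.mem_filter, Finset.mem_erase]
    constructor
    · rintro ⟨⟨_, hy⟩, hty⟩; exact ⟨hy, hty⟩
    · rintro ⟨hy, hty⟩; exact ⟨⟨ne_of_gt hty, hy⟩, hty⟩
  have h2 : ∀ x ∈ S, ((Sᶜ).filter fun y => x < y).card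
      = ((Sᶜ.erase t).filter fun y => x < y).card + (if x < t then 1 else 0) := by
    intro x hx
    by_cases hxt : x < t
    · rw [if_pos hxt]
      have hins : (Sᶜ).filter (fun y => x < y)
          = insert t ((Sᶜ.erase t).filter fun y => x < y) := by
        ext y
        simp only [Finset.mem_filter, Finset.mem_erase, Finset.mem_insert, Finset.mem_compl]
        constructor
        · rintro ⟨hy, hxy⟩
          by_cases hyt : y = t
          · exact Or.inl hyt
          · exact Or.inr ⟨⟨hyt, hy⟩, hxy⟩
        · rintro (rfl | ⟨⟨_, hy⟩, hxy⟩)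
          · exact ⟨ht, hxt⟩
          · exact ⟨hy, hxy⟩
      rw [hins, Finset.card_insert_of_notMem (by simp)]
    · rw [if_neg hxt, add_zero]
      congr 1
      ext y
      simp only [Finset.mem_filter, Finset.mem_erase]
      constructor
      · rintro ⟨hy, hxy⟩
        refine ⟨⟨fun hyt => hxt (hyt ▸ hxy), hy⟩, hxy⟩
      · rintro ⟨⟨_, hy⟩, hxy⟩; exact ⟨hy, hxy⟩
  rw [Finset.sum_congr rfl h2, Finset.sum_add_distrib, h1, ← Finset.card_filter]
  omega

lemma sign_step {c : ℕ} (B : ℕ) (S : Finset (Fin c)) (t : Fin c) (ht : t ∉ S) :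
    ((-1 : ℤ) ^ ((insert t S).card * B) * shuffleSign (insert t S))
      = ((-1) ^ (S.card * B) * shuffleSign S)
          * (-1) ^ (((Sᶜ).filter fun y => t < y).card + B + (S.filter (· < t)).card) := by
  unfold shuffleSign
  rw [← pow_add, ← pow_add, ← pow_add, Finset.card_insert_of_notMem ht, add_one_mul]
  apply neg_one_pow_congr
  have hE := shuffle_exponent S t ht
  omega

/-! ### The slice tensors -/

variable (i j : Fin m)

noncomputable def Pfun (a : Fin m → ℕ) (u : (s : Fin m) → Fin (a s) → V)
    (S : Finset (Fin (a i))) : TensorPowerExt K V m :=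
  (List.ofFn fun s : Fin m =>
    if s = i then slotWedgeOn i (u i) Sᶜ
    else if s = j then slotWedgeOn j (u i) S * slotExt j (u j)
    else slotExt s (u s)).prod

noncomputable def Efun (a : Fin m → ℕ) (u : (s : Fin m) → Fin (a s) → V)
    (S : Finset (Fin (a i))) : TensorPowerExt K V m :=
  (((-1 : ℤ)) ^ (S.card * (∑ s : Fin m, if i < s ∧ s < j then a s else 0)) * shuffleSign S) •
    Pfun i j a u S

lemma slotWedgeOn_univ (s : Fin m) {c : ℕ} (w : Fin c → V) :
    slotWedgeOn (K := K) s w Finset.univ = slotExt s w := by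
  rw [slotWedgeOn, slotExt, ιMulti_apply, Fin.sort_univ, List.ofFn_eq_map]

lemma Efun_empty (hne : i ≠ j) (a : Fin m → ℕ) (u : (s : Fin m) → Fin (a s) → V) :
    Efun i j a u ∅ = pureTensor (K := K) a u := by
  unfold Efun shuffleSign
  simp only [Finset.card_empty, zero_mul, pow_zero, Finset.sum_empty, mul_one, one_smul]
  unfold Pfun pureTensor
  congr 1
  congr 1
  funext s
  by_cases hsi : s = i
  · rw [if_pos hsi, hsi, Finset.compl_empty, slotWedgeOn_univ]
  · by_cases hsj : s = j
    · rw [if_neg hsi, if_pos hsj, hsj, slotWedgeOn_empty, one_mul]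
    · rw [if_neg hsi, if_neg hsj]

lemma double_count {c : ℕ} (n : ℕ) (f : Finset (Fin c) → TensorPowerExt K V m) :
    ∑ S ∈ Finset.powersetCard n (Finset.univ : Finset (Fin c)), ∑ t ∈ Sᶜ, f (insert t S)
      = (n + 1) • ∑ S ∈ Finset.powersetCard (n + 1) (Finset.univ : Finset (Fin c)), f S := by
  calc
    ∑ S ∈ Finset.powersetCard n (Finset.univ : Finset (Fin c)), ∑ t ∈ Sᶜ, f (insert t S)
        = ∑ x ∈ (Finset.powersetCard n (Finset.univ : Finset (Fin c))).sigma (fun S => Sᶜ),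
            f (insert x.2 x.1) :=
      Finset.sum_sigma' _ _ _
    _ = ∑ x ∈ (Finset.powersetCard (n + 1) (Finset.univ : Finset (Fin c))).sigma
            (fun S => (S : Finset (Fin c))), f x.1 := by
      refine Finset.sum_nbij' (fun x => ⟨insert x.2 x.1, x.2⟩) (fun x => ⟨x.1.erase x.2, x.2⟩)
        ?_ ?_ ?_ ?_ ?_
      · rintro ⟨S, t⟩ hx
        rw [Finset.mem_sigma] at hx
        obtain ⟨hS, htc⟩ := hx
        have htS : t ∉ S := by simpa using htc
        rw [Finset.mem_sigma]
        refine ⟨?_, Finset.mem_insert_self _ _⟩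
        rw [Finset.mem_powersetCard_univ] at hS ⊢
        rw [Finset.card_insert_of_notMem htS, hS]
      · rintro ⟨S, t⟩ hx
        rw [Finset.mem_sigma] at hx
        obtain ⟨hS, htS⟩ := hx
        rw [Finset.mem_sigma]
        constructor
        · rw [Finset.mem_powersetCard_univ] at hS ⊢
          rw [Finset.card_erase_of_mem htS, hS]
          omega
        · simp
      · rintro ⟨S, t⟩ hx
        rw [Finset.mem_sigma] at hx
        have htS : t ∉ S := by simpa using hx.2
        simp [Finset.erase_insert htS]
      · rintro ⟨S, t⟩ hx
        rw [Finset.mem_sigma] at hx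
        simp [Finset.insert_erase hx.2]
      · rintro ⟨S, t⟩ _
        rfl
    _ = ∑ S ∈ Finset.powersetCard (n + 1) (Finset.univ : Finset (Fin c)),
          ∑ _t ∈ S, f S :=
      (Finset.sum_sigma' (Finset.powersetCard (n + 1) (Finset.univ : Finset (Fin c)))
        (fun S => S) fun S _ => f S).symm
    _ = (n + 1) • ∑ S ∈ Finset.powersetCard (n + 1) (Finset.univ : Finset (Fin c)), f S := by
      rw [Finset.smul_sum]
      refine Finset.sum_congr rfl fun S hS => ?_
      rw [Finset.sum_const, Finset.mem_powersetCard_univ.mp hS]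

section Main

variable (D : Module.End K (TensorPowerExt K V m))
  (hL : ∀ x y : TensorPowerExt K V m, D (x * y) = D x * y + x * D y)
  (hgen : ∀ (s : Fin m) (v : V), D (slotVar s v) = if s = i then slotVar j v else 0)
  (hij : i < j)

include hL hgen hij

lemma D_Efun (a : Fin m → ℕ) (u : (s : Fin m) → Fin (a s) → V) (S : Finset (Fin (a i))) :
    D (Efun i j a u S) = ∑ t ∈ Sᶜ, Efun i j a u (insert t S) := by
  unfold Efun Pfun
  rw [map_zsmul, D_Pfun D hL i j hgen hij a u S, Finset.smul_sum]
  refine Finset.sum_congr rfl fun t ht => ?_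
  have htS : t ∉ S := by simpa using ht
  rw [smul_smul, ← sign_step _ S t htS]

lemma D_pow_pure (a : Fin m → ℕ) (u : (s : Fin m) → Fin (a s) → V) (n : ℕ) :
    (D ^ n) (pureTensor a u)
      = n.factorial • ∑ S ∈ Finset.powersetCard n (Finset.univ : Finset (Fin (a i))),
          Efun i j a u S := by
  induction n with
  | zero =>
    rw [pow_zero, Module.End.one_apply, Finset.powersetCard_zero, Finset.sum_singleton,
      Efun_empty i j (ne_of_lt hij), Nat.factorial_zero, one_smul]
  | succ n IH =>
    rw [pow_succ', Module.End.mul_apply, IH, map_nsmul, map_sum,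
      Finset.sum_congr rfl fun S _ => D_Efun i j D hL hgen hij a u S,
      double_count n (Efun i j a u), smul_smul, Nat.factorial_succ, mul_comm]

end Main

/-! ### Spanning by pure tensors -/

def pureSet : Set (TensorPowerExt K V m) :=
  {x | ∃ (a : Fin m → ℕ) (u : (s : Fin m) → Fin (a s) → V), x = pureTensor a u}

lemma slotExt_zero (s : Fin m) (w : Fin 0 → V) : slotExt (K := K) s w = 1 := by
  rw [slotExt, ιMulti_apply]
  simp

lemma one_mem_pureSet : (1 : TensorPowerExt K V m) ∈ pureSet (K := K) (V := V) (m := m) := by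
  refine ⟨fun _ => 0, fun _ => Fin.elim0, ?_⟩
  rw [pureTensor]
  refine (List.prod_eq_one fun x hx => ?_).symm
  obtain ⟨s, rfl⟩ := (List.mem_ofFn).mp hx
  exact slotExt_zero s _

lemma slotVar_mul_slotExt (s : Fin m) {c : ℕ} (v : V) (w : Fin c → V) :
    slotVar (K := K) s v * slotExt s w = slotExt s (Fin.cons v w) := by
  rw [slotExt, slotExt, ιMulti_apply, ιMulti_apply, List.ofFn_succ, List.prod_cons]
  simp [slotVar, Fin.cons_zero, Fin.cons_succ]

lemma slotExt_cast (s : Fin m) {c c' : ℕ} (hcc : c' = c) (w : Fin c → V) :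
    slotExt (K := K) s (fun k : Fin c' => w (Fin.cast hcc k)) = slotExt s w := by
  subst hcc
  rfl

lemma slotVar_mul_pure (s : Fin m) (v : V) (a : Fin m → ℕ)
    (u : (s' : Fin m) → Fin (a s') → V) :
    ∃ (a' : Fin m → ℕ) (u' : (s' : Fin m) → Fin (a' s') → V) (e : ℕ),
      slotVar (K := K) s v * pureTensor a u = ((-1 : ℤ) ^ e) • pureTensor a' u' := by
  refine ⟨Function.update a s (a s + 1),
    fun s' => if hss : s' = s
      then (fun k => (Fin.cons v (u s) : Fin (a s + 1) → V)
        (Fin.cast (show Function.update a s (a s + 1) s' = a s + 1 by rw [hss]; simp) k))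
      else (fun k => u s'
        (Fin.cast (show Function.update a s (a s + 1) s' = a s' by
          simp [Function.update_of_ne hss]) k)),
    ∑ s'' : Fin m, if s'' < s then a s'' else 0, ?_⟩
  rw [pureTensor, show slotVar (K := K) s v = ι K (Pi.single s v) from rfl,
    moveIn (fun s' => slotExt s' (u s')) a s (fun s' _ => isP_slotExt s' (u s'))
      (Pi.single s v)]
  congr 1
  rw [pureTensor]
  congr 1
  congr 1
  funext s'
  by_cases hss : s' = s
  · rw [hss, Function.update_self,
      show (ι K) (Pi.single s v) = slotVar (K := K) s v from rfl, slotVar_mul_slotExt,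
      dif_pos rfl]
    exact (slotExt_cast s _ _).symm
  · rw [Function.update_of_ne hss, dif_neg hss]
    exact (slotExt_cast s' _ _).symm

lemma slotVar_mul_mem (s : Fin m) (v : V) {y : TensorPowerExt K V m}
    (hy : y ∈ Submodule.span K (pureSet (K := K) (V := V) (m := m))) :
    slotVar (K := K) s v * y ∈ Submodule.span K (pureSet (K := K) (V := V) (m := m)) := by
  induction hy using Submodule.span_induction with
  | mem x hx =>
    obtain ⟨a, u, rfl⟩ := hx
    obtain ⟨a', u', e, he⟩ := slotVar_mul_pure (K := K) s v a u
    rw [he]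
    have hmem : pureTensor (K := K) a' u' ∈ pureSet (K := K) (V := V) (m := m) := ⟨a', u', rfl⟩
    exact zsmul_mem (Submodule.subset_span hmem) _
  | zero => simp
  | add x y _ _ hx' hy' =>
    rw [mul_add]
    exact Submodule.add_mem _ hx' hy'
  | smul k x _ hx' =>
    rw [mul_smul_comm]
    exact Submodule.smul_mem _ k hx'

lemma slotExt_mul_mem (s : Fin m) :
    ∀ {c : ℕ} (w : Fin c → V) {y : TensorPowerExt K V m},
      y ∈ Submodule.span K (pureSet (K := K) (V := V) (m := m)) →
      slotExt s w * y ∈ Submodule.span K (pureSet (K := K) (V := V) (m := m)) := by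
  intro c
  induction c with
  | zero =>
    intro w y hy
    rw [slotExt_zero, one_mul]
    exact hy
  | succ c IH =>
    intro w y hy
    have hw : slotExt (K := K) s w = slotVar s (w 0) * slotExt s (Fin.tail w) := by
      rw [slotVar_mul_slotExt, Fin.cons_self_tail]
    rw [hw, mul_assoc]
    exact slotVar_mul_mem s (w 0) (IH (Fin.tail w) hy)

lemma listExt_mul_mem :
    ∀ (l : List (TensorPowerExt K V m)),
      (∀ x ∈ l, ∃ (s : Fin m) (c : ℕ) (w : Fin c → V), x = slotExt s w) →
      ∀ {y : TensorPowerExt K V m},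
        y ∈ Submodule.span K (pureSet (K := K) (V := V) (m := m)) →
        l.prod * y ∈ Submodule.span K (pureSet (K := K) (V := V) (m := m)) := by
  intro l
  induction l with
  | nil =>
    intro _ y hy
    rw [List.prod_nil, one_mul]
    exact hy
  | cons x l IH =>
    intro hl y hy
    obtain ⟨s, c, w, rfl⟩ := hl x (List.mem_cons_self)
    rw [List.prod_cons, mul_assoc]
    exact slotExt_mul_mem s w (IH (fun z hz => hl z (List.mem_cons_of_mem _ hz)) hy)

lemma span_pureSet_top :
    Submodule.span K (pureSet (K := K) (V := V) (m := m)) = ⊤ := by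
  rw [Submodule.eq_top_iff']
  intro x
  induction x using ExteriorAlgebra.induction with
  | algebraMap r =>
    rw [Algebra.algebraMap_eq_smul_one]
    exact Submodule.smul_mem _ _ (Submodule.subset_span one_mem_pureSet)
  | ι w =>
    have hw : (ι K) w = ∑ s : Fin m, slotVar (K := K) s (w s) := by
      calc (ι K) w = (ι K) (∑ s : Fin m, Pi.single s (w s)) := by
            rw [Finset.univ_sum_single]
        _ = ∑ s : Fin m, (ι K) (Pi.single s (w s)) := map_sum _ _ _
    rw [hw]
    refine Submodule.sum_mem _ fun s _ => ?_
    have h1 : (1 : TensorPowerExt K V m) ∈ Submodule.span K (pureSet (K := K) (V := V) (m := m)) :=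
      Submodule.subset_span one_mem_pureSet
    simpa using slotVar_mul_mem s (w s) h1
  | mul x y hx hy =>
    induction hx using Submodule.span_induction with
    | mem z hz =>
      obtain ⟨a, u, rfl⟩ := hz
      rw [pureTensor]
      refine listExt_mul_mem _ (fun z hz => ?_) hy
      obtain ⟨s, rfl⟩ := (List.mem_ofFn).mp hz
      exact ⟨s, a s, u s, rfl⟩
    | zero => simp
    | add z z' _ _ hz hz' =>
      rw [add_mul]
      exact Submodule.add_mem _ hz hz'
    | smul k z _ hz =>
      rw [smul_mul_assoc]
      exact Submodule.smul_mem _ k hz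
  | add x y hx hy => exact Submodule.add_mem _ hx hy

end Stmt13

/-- in characteristic zero, the raising geometric product `⋄_{ji}^{(h)}`
(`i < j`), characterized on decomposable tensors by the slice formula
`⋄_{ji}^{(h)}(A₁⊗⋯⊗Aₘ) = (-1)^{h(a_{i+1}+⋯+a_{j-1})} Σ_{(Aᵢ)₍ₐᵢ₋ₕ,ₕ₎} ⋯⊗(Aᵢ)₍₁₎⊗⋯⊗(Aᵢ)₍₂₎Aⱼ⊗⋯`,
equals the `h`-th divided power `(⋄_{ji})^h / h!` of the simple geometric product `⋄_{ji}`;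
in particular `(⋄_{ji})^h (A₁⊗⋯⊗Aₘ)` is divisible by `h!`. -/
theorem stmt13 {K V : Type*} [Field K] [CharZero K] [AddCommGroup V] [Module K V]
    [FiniteDimensional K V] {m : ℕ} (i j : Fin m) (hij : i < j) (h : ℕ)
    (D : Module.End K (TensorPowerExt K V m))
    (hLeibniz : ∀ x y : TensorPowerExt K V m, D (x * y) = D x * y + x * D y)
    (hgen : ∀ (s : Fin m) (v : V), D (slotVar s v) = if s = i then slotVar j v else 0)
    (Dh : Module.End K (TensorPowerExt K V m))
    (hDh : ∀ (a : Fin m → ℕ) (u : (s : Fin m) → Fin (a s) → V),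
      Dh (pureTensor a u) =
        ((-1 : ℤ) ^ (h * ∑ s ∈ Finset.Ioo i j, a s)) •
          ∑ S ∈ Finset.powersetCard h (Finset.univ : Finset (Fin (a i))),
            shuffleSign S •
              (List.ofFn fun s : Fin m =>
                if s = i then slotWedgeOn i (u i) Sᶜ
                else if s = j then slotWedgeOn j (u i) S * slotExt j (u j)
                else slotExt s (u s)).prod) :
    D ^ h = (h.factorial : K) • Dh ∧
      ∀ (a : Fin m → ℕ) (u : (s : Fin m) → Fin (a s) → V),
        ∃ y, (D ^ h) (pureTensor a u) = (h.factorial : K) • y := by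
  have hIoo : ∀ (a : Fin m → ℕ),
      (∑ s ∈ Finset.Ioo i j, a s) = ∑ s : Fin m, if i < s ∧ s < j then a s else 0 := by
    intro a
    rw [← Finset.sum_filter]
    congr 1
    ext s
    simp [Finset.mem_Ioo]
  have hDh' : ∀ (a : Fin m → ℕ) (u : (s : Fin m) → Fin (a s) → V),
      Dh (pureTensor a u)
        = ∑ S ∈ Finset.powersetCard h (Finset.univ : Finset (Fin (a i))),
            Stmt13.Efun i j a u S := by
    intro a u
    rw [hDh a u, hIoo, Finset.smul_sum]
    refine Finset.sum_congr rfl fun S hS => ?_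
    rw [smul_smul]
    unfold Stmt13.Efun Stmt13.Pfun
    rw [Finset.mem_powersetCard_univ.mp hS]
  have key : ∀ (a : Fin m → ℕ) (u : (s : Fin m) → Fin (a s) → V),
      (D ^ h) (pureTensor a u) = (h.factorial : K) • Dh (pureTensor a u) := by
    intro a u
    rw [Stmt13.D_pow_pure i j D hLeibniz hgen hij a u h, hDh' a u,
      Nat.cast_smul_eq_nsmul K]
  constructor
  · apply LinearMap.ext_on (Stmt13.span_pureSet_top (K := K) (V := V) (m := m))
    rintro x ⟨a, u, rfl⟩
    rw [LinearMap.smul_apply]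
    exact key a u
  · intro a u
    exact ⟨Dh (pureTensor a u), key a u⟩
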